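/- arXiv:2202.13925 — 3 statements merged into one kernel-verified Lean document; each statement's English description precedes it below -/
import Mathlib

section
/- Let k ≥ 1 and let the alphabet be A = {0,1}^k (so |A| = 2^k). For any natural numbers n_b ≤ n_o and any fixed string s over A of length n_b, the number of strings f over A of length n_o that contain s as a subsequence equals ∑_{j=0}^{n_o−n_b} C(n_o, j+n_b) · (2^k − 1)^{n_o−n_b−j}. (This is the number m of possible pre-images of an outsourced string under the deletion transformation when the deleted positions are unknown.) -/
open Finset

private def Fc (q' n m : ℕ) : ℕ :=
  ∑ j ∈ Finset.range (n - m + 1), n.choose (j + m) * q' ^ (n - m - j)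

private lemma Fc_zero_right (q' n : ℕ) : Fc q' n 0 = (q' + 1) ^ n := by
  have := add_pow (R := ℕ) 1 q' n
  simp only [one_pow, one_mul] at this
  rw [Fc]
  simp only [Nat.sub_zero, Nat.add_zero]
  rw [add_comm 1 q'] at this
  rw [this]
  exact Finset.sum_congr rfl fun j hj => by push_cast; ring

private lemma Fc_big (q' n m : ℕ) (h : n < m) : Fc q' n m = 0 := by
  rw [Fc, Nat.sub_eq_zero_of_le h.le]
  simp [Nat.choose_eq_zero_of_lt (lt_of_lt_of_le h (Nat.le_add_left m _))]

private lemma Fc_succ (q' n m : ℕ) :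
    Fc q' (n + 1) (m + 1) = Fc q' n m + q' * Fc q' n (m + 1) := by
  rcases lt_or_ge n m with hnm | hmn
  · rw [Fc_big q' n m hnm, Fc_big q' n (m+1) (hnm.trans (Nat.lt_succ_self m)),
      Fc_big q' (n+1) (m+1) (Nat.succ_lt_succ hnm)]
    simp
  rcases eq_or_lt_of_le hmn with rfl | hlt
  · simp [Fc, Nat.sub_self, Nat.choose_eq_zero_of_lt]
  · -- m < n
    have hd : 1 ≤ n - m := by omega
    set d := n - m with hdef
    have h1 : (n + 1) - (m + 1) = d := by omega
    have h2 : n - (m + 1) = d - 1 := by omega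
    rw [Fc, Fc, Fc, h1, h2]
    have pascal : ∀ j, (n+1).choose (j + (m+1)) = n.choose (j + m) + n.choose (j + m + 1) := by
      intro j
      have : j + (m + 1) = (j + m) + 1 := by omega
      rw [this, Nat.choose_succ_succ']
    calc ∑ j ∈ range (d + 1), (n+1).choose (j + (m+1)) * q' ^ (d - j)
        = ∑ j ∈ range (d + 1), (n.choose (j + m) * q' ^ (d - j)
            + n.choose (j + m + 1) * q' ^ (d - j)) := by
          exact Finset.sum_congr rfl fun j _ => by rw [pascal j, add_mul]
      _ = ∑ j ∈ range (d + 1), n.choose (j + m) * q' ^ (d - j)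
            + ∑ j ∈ range (d + 1), n.choose (j + m + 1) * q' ^ (d - j) := by
          rw [Finset.sum_add_distrib]
      _ = ∑ j ∈ range (d + 1), n.choose (j + m) * q' ^ (d - j)
            + q' * ∑ j ∈ range (d - 1 + 1), n.choose (j + (m + 1)) * q' ^ (d - 1 - j) := by
          congr 1
          rw [Finset.sum_range_succ]
          have hz : n.choose (d + m + 1) = 0 := by
            apply Nat.choose_eq_zero_of_lt; omega
          rw [hz, zero_mul, add_zero, Finset.mul_sum]
          have hd1 : d - 1 + 1 = d := by omega
          rw [hd1]
          refine Finset.sum_congr rfl fun j hj => ?_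
          rw [Finset.mem_range] at hj
          have : d - j = (d - 1 - j) + 1 := by omega
          rw [this, pow_succ]
          have : j + (m + 1) = j + m + 1 := by omega
          rw [this]; ring

variable {α : Type*} [DecidableEq α] [Fintype α]

private def listFinset (α : Type*) [DecidableEq α] [Fintype α] : ℕ → Finset (List α)
  | 0 => {[]}
  | n + 1 => (Finset.univ ×ˢ listFinset α n).image fun p => p.1 :: p.2

private lemma mem_listFinset (n : ℕ) (f : List α) :
    f ∈ listFinset α n ↔ f.length = n := by
  induction n generalizing f with
  | zero => simp [listFinset, List.length_eq_zero_iff]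
  | succ n ih =>
    simp only [listFinset, Finset.mem_image, Finset.mem_product, Finset.mem_univ, true_and]
    constructor
    · rintro ⟨⟨a, t⟩, ht, rfl⟩
      simp [(ih t).mp (by simpa using ht)]
    · intro hf
      cases f with
      | nil => simp at hf
      | cons a t =>
        exact ⟨(a, t), by simpa [ih] using Nat.succ_injective hf, rfl⟩

private lemma cons_inj : Function.Injective (fun p : α × List α => p.1 :: p.2) := by
  rintro ⟨a, t⟩ ⟨b, u⟩ h
  simp only [List.cons.injEq] at h
  exact Prod.ext h.1 h.2

private lemma card_listFinset (n : ℕ) : (listFinset α n).card = Fintype.card α ^ n := by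
  induction n with
  | zero => simp [listFinset]
  | succ n ih =>
    rw [listFinset, Finset.card_image_of_injective _ cons_inj,
      Finset.card_product, Finset.card_univ, ih, pow_succ]
    ring

private lemma count_sublist (hq : 1 ≤ Fintype.card α) (n : ℕ) (s : List α) :
    ((listFinset α n).filter (fun f => s.Sublist f)).card
      = Fc (Fintype.card α - 1) n s.length := by
  induction n generalizing s with
  | zero =>
    cases s with
    | nil => simp [listFinset, Fc]
    | cons c s' =>
      rw [Fc_big _ _ _ (by simp)]
      rw [listFinset, Finset.filter_singleton]
      simp
  | succ n ih =>
    cases s with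
    | nil =>
      simp only [List.nil_sublist, Finset.filter_true, List.length_nil]
      rw [Fc_zero_right, Nat.sub_add_cancel hq, card_listFinset]
    | cons c s' =>
      have key : ((listFinset α (n+1)).filter (fun f => (c :: s').Sublist f)).card
          = ∑ a : α, ((listFinset α n).filter
              (fun t => (c :: s').Sublist (a :: t))).card := by
        rw [listFinset]
        rw [Finset.filter_image, Finset.card_image_of_injective _ cons_inj]
        rw [Finset.card_filter, Finset.sum_product]
        exact Finset.sum_congr rfl fun a _ => (Finset.card_filter _ _).symm
      rw [key]
      have step : ∀ a : α, ((listFinset α n).filter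
            (fun t => (c :: s').Sublist (a :: t))).card
          = if a = c then Fc (Fintype.card α - 1) n s'.length
            else Fc (Fintype.card α - 1) n (c :: s').length := by
        intro a
        by_cases hac : a = c
        · subst hac
          rw [if_pos rfl, ← ih s']
          congr 1
          exact Finset.filter_congr fun t _ => by
            simpa using List.cons_sublist_cons (a := a)
        · rw [if_neg hac, ← ih (c :: s')]
          congr 1
          refine Finset.filter_congr fun t _ => ?_
          constructor
          · intro h
            cases h with
            | cons _ h => exact h
            | cons_cons => exact absurd rfl hac
          · exact fun h => h.cons a
      calc ∑ a : α, ((listFinset α n).filter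
              (fun t => (c :: s').Sublist (a :: t))).card
          = ∑ a : α, (if a = c then Fc (Fintype.card α - 1) n s'.length
              else Fc (Fintype.card α - 1) n (c :: s').length) :=
            Finset.sum_congr rfl fun a _ => step a
        _ = Fc (Fintype.card α - 1) n s'.length
              + (Fintype.card α - 1) * Fc (Fintype.card α - 1) n (c :: s').length := by
            rw [← Finset.add_sum_erase _ _ (Finset.mem_univ c), if_pos rfl]
            congr 1
            rw [Finset.sum_congr rfl (fun a ha => if_neg (Finset.ne_of_mem_erase ha)),
              Finset.sum_const, Finset.card_erase_of_mem (Finset.mem_univ c),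
              Finset.card_univ, smul_eq_mul]
        _ = Fc (Fintype.card α - 1) (n + 1) (c :: s').length := by
            rw [List.length_cons, Fc_succ]

/-- The number of strings `f` of length `n_o` over the alphabet `Fin (2^k)` that contain a
fixed string `s` of length `n_b` as a subsequence equals
`∑_{j=0}^{n_o-n_b} C(n_o, j+n_b) (2^k - 1)^{n_o-n_b-j}`. -/
theorem bonsai_preimage_count (k n_b n_o : ℕ) (hk : 1 ≤ k) (h : n_b ≤ n_o)
    (s : List (Fin (2 ^ k))) (hs : s.length = n_b) :
    {f : List (Fin (2 ^ k)) | f.length = n_o ∧ s.Sublist f}.ncard =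
      ∑ j ∈ Finset.range (n_o - n_b + 1),
        n_o.choose (j + n_b) * (2 ^ k - 1) ^ (n_o - n_b - j) := by
  have hset : {f : List (Fin (2 ^ k)) | f.length = n_o ∧ s.Sublist f}
      = ↑((listFinset (Fin (2 ^ k)) n_o).filter (fun f => s.Sublist f)) := by
    ext f
    simp [mem_listFinset, and_comm]
  rw [hset, Set.ncard_coe_finset,
    count_sublist (by simp [Nat.one_le_two_pow]) n_o s, hs]
  simp [Fc, Fintype.card_fin]
end

section
/- Let k ≥ 1 and let the alphabet be A = {0,1}^k. For any n_b ≤ n_o, the number of strings of length n_o over A containing a fixed string s of length n_b as a subsequence does not depend on s: for any two strings s and s' over A, each of length n_b, the sets {f : |f| = n_o, s is a subsequence of f} and {f : |f| = n_o, s' is a subsequence of f} have the same cardinality. -/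
variable {A : Type*} [DecidableEq A]

def recode : List A → List A → List A → List A
  | a :: t, a' :: t', f =>
    match f.dropWhile (· ≠ a) with
    | [] => f
    | _ :: v => (f.takeWhile (· ≠ a)).map (Equiv.swap a a') ++ a' :: recode t t' v
  | _, _, f => f

lemma cons_sublist_iff_drop (a : A) (t f : List A) :
    (a :: t).Sublist f ↔ ∃ v, f.dropWhile (· ≠ a) = a :: v ∧ t.Sublist v := by
  induction f with
  | nil => simp
  | cons b f ih =>
    by_cases hb : b = a
    · subst hb
      simp [List.dropWhile_cons, List.cons_sublist_cons]
    · rw [List.dropWhile_cons, if_pos (by simp [hb]), ← ih]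
      constructor
      · intro h
        cases h with
        | cons _ h => exact h
        | cons_cons h => exact absurd rfl hb
      · exact fun h => h.cons b

omit [DecidableEq A] in
lemma takeWhile_append_cons (p : A → Bool) (u : List A) (b : A) (w : List A)
    (hu : ∀ x ∈ u, p x) (hb : ¬ p b) :
    (u ++ b :: w).takeWhile p = u ∧ (u ++ b :: w).dropWhile p = b :: w := by
  induction u with
  | nil => simp [List.takeWhile_cons, List.dropWhile_cons, hb]
  | cons c u ih =>
    have hc : p c := hu c (by simp)
    have := ih (fun x hx => hu x (by simp [hx]))
    simp [List.takeWhile_cons, List.dropWhile_cons, hc, this.1, this.2]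

lemma recode_spec : ∀ (s s' f : List A), s.length = s'.length → s.Sublist f →
    (recode s s' f).length = f.length ∧ s'.Sublist (recode s s' f) ∧
      recode s' s (recode s s' f) = f := by
  intro s
  induction s with
  | nil =>
    rintro (_ | ⟨a', t'⟩) f hlen hf
    · simp [recode]
    · simp at hlen
  | cons a t ih =>
    rintro (_ | ⟨a', t'⟩) f hlen hf
    · simp at hlen
    · simp only [List.length_cons, Nat.add_right_cancel_iff] at hlen
      obtain ⟨v, hdrop, htv⟩ := (cons_sublist_iff_drop a t f).mp hf
      set u := f.takeWhile (· ≠ a) with hu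
      have hfu : u ++ a :: v = f := by rw [hu, ← hdrop]; exact List.takeWhile_append_dropWhile
      have hrec : recode (a :: t) (a' :: t') f
          = u.map (Equiv.swap a a') ++ a' :: recode t t' v := by
        rw [recode, hdrop]
      obtain ⟨ihl, ihs, ihr⟩ := ih t' v hlen htv
      refine ⟨?_, ?_, ?_⟩
      · rw [hrec, ← hfu]; simp [ihl]
      · rw [hrec]
        exact (List.cons_sublist_cons.mpr ihs).trans (List.sublist_append_right _ _)
      · rw [hrec]
        have hu' : ∀ x ∈ u.map (Equiv.swap a a'), (x ≠ a' : Bool) := by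
          intro x hx
          simp only [List.mem_map] at hx
          obtain ⟨y, hy, rfl⟩ := hx
          have hya : y ≠ a := by
            have := List.mem_takeWhile_imp (hu ▸ hy)
            simpa using this
          simp only [ne_eq, decide_eq_true_eq]
          intro hxa
          apply hya
          have h2 : Equiv.swap a a' y = Equiv.swap a a' a := by
            rw [Equiv.swap_apply_left]; exact hxa
          exact (Equiv.swap a a').injective h2
        obtain ⟨htw, hdw⟩ := takeWhile_append_cons (· ≠ a') (u.map (Equiv.swap a a')) a'
          (recode t t' v) hu' (by simp)
        have hrec2 : recode (a' :: t') (a :: t)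
            (u.map (Equiv.swap a a') ++ a' :: recode t t' v)
            = (u.map (Equiv.swap a a')).map (Equiv.swap a' a) ++ a :: recode t' t (recode t t' v) := by
          rw [recode, hdw, htw]
        rw [hrec2, ihr, ← hfu]
        congr 1
        rw [List.map_map, Equiv.swap_comm a' a]
        have : (Equiv.swap a a') ∘ (Equiv.swap a a') = id := by
          ext x; simp
        rw [this, List.map_id]

/-- The number of strings of length `n_o` over `Fin (2^k)` containing a fixed string of
length `n_b` as a subsequence does not depend on the fixed string. -/
theorem bonsai_preimage_count_independent (k n_b n_o : ℕ) (hk : 1 ≤ k) (h : n_b ≤ n_o)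
    (s s' : List (Fin (2 ^ k))) (hs : s.length = n_b) (hs' : s'.length = n_b) :
    {f : List (Fin (2 ^ k)) | f.length = n_o ∧ s.Sublist f}.ncard =
      {f : List (Fin (2 ^ k)) | f.length = n_o ∧ s'.Sublist f}.ncard := by
  have hlen : s.length = s'.length := hs.trans hs'.symm
  have himg : {f : List (Fin (2 ^ k)) | f.length = n_o ∧ s'.Sublist f}
      = recode s s' '' {f : List (Fin (2 ^ k)) | f.length = n_o ∧ s.Sublist f} := by
    ext g
    constructor
    · rintro ⟨hg1, hg2⟩
      obtain ⟨hl, hsub, hr⟩ := recode_spec s' s g hlen.symm hg2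
      exact ⟨recode s' s g, ⟨hl.trans hg1, hsub⟩, hr⟩
    · rintro ⟨f, ⟨hf1, hf2⟩, rfl⟩
      obtain ⟨hl, hsub, _⟩ := recode_spec s s' f hlen hf2
      exact ⟨hl.trans hf1, hsub⟩
  rw [himg]
  symm
  apply Set.ncard_image_of_injOn
  intro f1 hf1 f2 hf2 heq
  have h1 := (recode_spec s s' f1 hlen hf1.2).2.2
  have h2 := (recode_spec s s' f2 hlen hf2.2).2.2
  rw [← h1, ← h2, heq]
end

section
/- Let k ≥ 1, let A = Fin (2^k), and let n_b ≤ n_o. Let s be a string over A of length n_b and let P be the (finite, nonempty) set of strings over A of length n_o containing s as a subsequence. If F is a random variable uniformly distributed on P, then the base-2 Shannon entropy of F equals log₂(∑_{j=0}^{n_o−n_b} C(n_o, j+n_b) · (2^k − 1)^{n_o−n_b−j}). (This is the uncertainty U faced by a weak adversary that cannot break the PRNG.) -/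
/-- The set of pre-images of an outsource `s`: strings of length `n_o` over `Fin (2^k)`
containing `s` as a subsequence. -/
def preimages (k n_o : ℕ) (s : List (Fin (2 ^ k))) : Set (List (Fin (2 ^ k))) :=
  {f : List (Fin (2 ^ k)) | f.length = n_o ∧ s.Sublist f}

/-- The probability mass function of a random variable uniformly distributed on a set `P`. -/
noncomputable def uniformOn {α : Type*} (P : Set α) : α → ℝ :=
  P.indicator fun _ => ((P.ncard : ℝ))⁻¹

/-- Base-2 Shannon entropy of a probability mass function. -/
noncomputable def shannonEntropy {α : Type*} (p : α → ℝ) : ℝ :=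
  -∑' a, p a * Real.logb 2 (p a)

open Finset

section Count
variable {α : Type*} [DecidableEq α] [Fintype α]

/-- all lists of length n -/
def allL (α : Type*) [DecidableEq α] [Fintype α] : ℕ → Finset (List α)
  | 0 => {([] : List α)}
  | n+1 => Finset.univ.biUnion fun b => (allL α n).image (b :: ·)

lemma mem_allL (n : ℕ) (f : List α) : f ∈ allL α n ↔ f.length = n := by
  induction n generalizing f with
  | zero => simp [allL, List.length_eq_zero_iff]
  | succ n ih =>
    simp only [allL, mem_biUnion, mem_image, mem_univ, true_and]
    constructor
    · rintro ⟨b, f', hf', rfl⟩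
      simp [(ih f').mp hf']
    · intro hl
      cases f with
      | nil => simp at hl
      | cons b f' => exact ⟨b, f', (ih f').mpr (by simpa using hl), rfl⟩

/-- number of length-n supersequences of s -/
def cnt (s : List α) (n : ℕ) : ℕ := ((allL α n).filter (s.Sublist ·)).card

lemma cnt_nil (n : ℕ) : cnt ([] : List α) n = Fintype.card α ^ n := by
  induction n with
  | zero => simp [cnt, allL]
  | succ n ih =>
    rw [cnt, filter_true_of_mem (fun _ _ => List.nil_sublist _)] at ih ⊢
    rw [allL, card_biUnion, pow_succ]
    · have : ∀ b ∈ (Finset.univ : Finset α),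
          ((allL α n).image (b :: ·)).card = Fintype.card α ^ n := fun b _ => by
        rw [card_image_of_injective _ (fun x y h => by simpa using h), ih]
      rw [Finset.sum_congr rfl this]
      simp [mul_comm]
    · intro b1 _ b2 _ hne
      simp only [disjoint_left, mem_image]
      rintro f ⟨f1, _, rfl⟩ ⟨f2, _, h⟩
      injection h with h1 h2
      exact hne h1.symm

lemma cnt_of_lt {s : List α} {n : ℕ} (h : n < s.length) : cnt s n = 0 := by
  rw [cnt, card_eq_zero, filter_eq_empty_iff]
  intro f hf hsub
  rw [mem_allL] at hf
  exact absurd (hsub.length_le) (by omega)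

lemma cnt_cons (a : α) (t : List α) (n : ℕ) :
    cnt (a :: t) (n+1) = cnt t n + (Fintype.card α - 1) * cnt (a :: t) n := by
  rw [cnt, allL, filter_biUnion, card_biUnion]
  · have hcard : ∀ b ∈ (Finset.univ : Finset α),
        (((allL α n).image (b :: ·)).filter ((a :: t).Sublist ·)).card
        = ((allL α n).filter (fun f' => (a :: t).Sublist (b :: f'))).card := fun b _ => by
      rw [Finset.filter_image]
      exact card_image_of_injective _ (fun x y h => by simpa using h)
    rw [Finset.sum_congr rfl hcard, ← Finset.add_sum_erase _ _ (mem_univ a)]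
    congr 1
    · apply congrArg
      apply filter_congr
      intro f _
      simp [List.cons_sublist_cons]
    · have : ∀ b ∈ (Finset.univ.erase a),
          ((allL α n).filter (fun f' => (a :: t).Sublist (b :: f'))).card = cnt (a :: t) n :=
        fun b hb => by
          apply congrArg
          apply filter_congr
          intro f _
          simp only [mem_erase] at hb
          constructor
          · intro hh
            rcases List.cons_sublist_cons'.mp hh with hh | ⟨hh, _⟩
            · exact hh
            · exact absurd hh.symm hb.1
          · exact fun hh => hh.cons _
      rw [Finset.sum_congr rfl this, Finset.sum_const,
        card_erase_of_mem (mem_univ a), card_univ, smul_eq_mul]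
  · intro b1 _ b2 _ hne
    simp only [disjoint_left, mem_filter, mem_image]
    rintro f ⟨⟨f1, _, rfl⟩, _⟩ ⟨⟨f2, _, h⟩, _⟩
    injection h with h1 h2
    exact hne h1.symm

lemma binom_sum (x n : ℕ) :
    ∑ j ∈ range (n + 1), n.choose j * x ^ (n - j) = (x + 1) ^ n := by
  have h1 : ∑ j ∈ range (n + 1), n.choose j * x ^ (n - j)
      = ∑ j ∈ range (n + 1), n.choose j * x ^ j := by
    rw [← Finset.sum_range_reflect]
    apply Finset.sum_congr rfl
    intro j hj
    rw [mem_range] at hj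
    have h : n + 1 - 1 - j = n - j := by omega
    rw [h, Nat.choose_symm (by omega), Nat.sub_sub_self (by omega)]
  rw [h1]
  have h2 := add_pow x 1 n
  simp only [one_pow, mul_one, Nat.cast_id] at h2
  rw [h2]
  apply Finset.sum_congr rfl
  intro j _
  ring

lemma pascal_sum (x m : ℕ) : ∀ d : ℕ,
    ∑ j ∈ range (d + 1), (m + d + 1).choose (j + (m + 1)) * x ^ (d - j)
      = ∑ j ∈ range (d + 1), (m + d).choose (j + m) * x ^ (d - j)
        + x * ∑ j ∈ range (d - 1 + 1), (m + d).choose (j + (m + 1)) * x ^ (d - 1 - j)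
  | 0 => by simp [Nat.choose_succ_self]
  | (e+1) => by
    have hpas : ∀ j ∈ range (e + 2),
        (m + (e + 1) + 1).choose (j + (m + 1)) * x ^ (e + 1 - j)
        = (m + (e + 1)).choose (j + m) * x ^ (e + 1 - j)
          + (m + (e + 1)).choose (j + (m + 1)) * x ^ (e + 1 - j) := fun j _ => by
      have h1 : j + (m + 1) = (j + m) + 1 := by omega
      have h2 : m + (e + 1) + 1 = (m + e + 1) + 1 := by omega
      have h3 : m + (e + 1) = m + e + 1 := by omega
      rw [← add_mul, h1, h2, h3, Nat.choose_succ_succ']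
    rw [Finset.sum_congr rfl hpas, Finset.sum_add_distrib]
    congr 1
    rw [Finset.mul_sum]
    have he : e + 1 - 1 = e := rfl
    rw [he, Finset.sum_range_succ]
    have hz : (m + (e + 1)).choose (e + 1 + (m + 1)) = 0 :=
      Nat.choose_eq_zero_of_lt (by omega)
    rw [hz, zero_mul, add_zero]
    apply Finset.sum_congr rfl
    intro j hj
    rw [mem_range] at hj
    have h3 : e + 1 - j = (e - j) + 1 := by omega
    rw [h3, pow_succ]
    ring

lemma cnt_formula [Nonempty α] : ∀ (n : ℕ) (s : List α), s.length ≤ n →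
    cnt s n = ∑ j ∈ range (n - s.length + 1),
      n.choose (j + s.length) * (Fintype.card α - 1) ^ (n - s.length - j) := by
  have hq : 1 ≤ Fintype.card α := Fintype.card_pos
  intro n
  induction n with
  | zero =>
    intro s hs
    obtain rfl : s = [] := List.length_eq_zero_iff.mp (by omega)
    simp [cnt_nil]
  | succ n ih =>
    intro s hs
    cases s with
    | nil =>
      rw [cnt_nil]
      simp only [List.length_nil, Nat.sub_zero, Nat.add_zero]
      rw [binom_sum, Nat.sub_add_cancel hq]
    | cons a t =>
      simp only [List.length_cons] at hs ⊢
      rw [cnt_cons]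
      rcases Nat.lt_or_ge n (t.length + 1) with hlt | hge
      · -- t.length = n
        have ht : t.length = n := by omega
        rw [cnt_of_lt (s := a :: t) (n := n) (by simp [ht]), ih t (by omega), ht]
        simp
      · -- t.length + 1 ≤ n
        rw [ih t (by omega), ih (a :: t) (by simpa using hge)]
        simp only [List.length_cons]
        obtain ⟨d, rfl⟩ : ∃ d, n = t.length + d := ⟨n - t.length, by omega⟩
        have e1 : t.length + d + 1 - (t.length + 1) = d := by omega
        have e2 : t.length + d - t.length = d := by omega
        have e3 : t.length + d - (t.length + 1) = d - 1 := by omega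
        rw [e1, e2, e3]
        exact (pascal_sum (Fintype.card α - 1) t.length d).symm

end Count

lemma shannon_uniform_finset {α : Type*} [DecidableEq α] (T : Finset α) (hT : T.Nonempty) :
    shannonEntropy (uniformOn (↑T : Set α)) = Real.logb 2 (T.card : ℝ) := by
  set N : ℕ := T.card with hN
  have hN0 : (N : ℝ) ≠ 0 := Nat.cast_ne_zero.mpr (Finset.card_ne_zero_of_mem hT.choose_spec)
  have hcard : ((↑T : Set α)).ncard = N := by rw [Set.ncard_coe_finset]
  set c : ℝ := (N : ℝ)⁻¹ with hc
  have huni : ∀ a, uniformOn (↑T : Set α) a = Set.indicator (↑T) (fun _ => c) a := by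
    intro a; rw [uniformOn, hcard]
  have key : ∀ a, uniformOn (↑T : Set α) a * Real.logb 2 (uniformOn (↑T : Set α) a)
      = Set.indicator (↑T : Set α) (fun _ => c * Real.logb 2 c) a := by
    intro a
    rw [huni a]
    by_cases h : a ∈ (↑T : Set α)
    · rw [Set.indicator_of_mem h, Set.indicator_of_mem h]
    · rw [Set.indicator_of_notMem h, Set.indicator_of_notMem h, zero_mul]
  rw [shannonEntropy, tsum_congr key,
    tsum_eq_sum (s := T) (fun b hb => Set.indicator_of_notMem (by simpa using hb) _)]
  have : ∀ a ∈ T, Set.indicator (↑T : Set α) (fun _ => c * Real.logb 2 c) a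
      = c * Real.logb 2 c := fun a ha => Set.indicator_of_mem (by simpa using ha) _
  rw [Finset.sum_congr rfl this, Finset.sum_const, nsmul_eq_mul, hc, Real.logb_inv]
  field_simp
  rfl

/-- The uncertainty faced by a weak adversary that cannot break the PRNG: the entropy of a
uniform distribution on the set of pre-images of the outsource `s` equals
`log₂(∑_{j=0}^{n_o-n_b} C(n_o, j+n_b) (2^k-1)^(n_o-n_b-j))`. -/
theorem bonsai_weak_adversary_uncertainty (k n_b n_o : ℕ) (hk : 1 ≤ k) (h : n_b ≤ n_o)
    (s : List (Fin (2 ^ k))) (hs : s.length = n_b) :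
    shannonEntropy (uniformOn (preimages k n_o s)) =
      Real.logb 2
        ((∑ j ∈ Finset.range (n_o - n_b + 1),
          n_o.choose (j + n_b) * (2 ^ k - 1) ^ (n_o - n_b - j) : ℕ) : ℝ) := by
  haveI : Nonempty (Fin (2 ^ k)) := ⟨⟨0, by positivity⟩⟩
  set T : Finset (List (Fin (2 ^ k))) := (allL (Fin (2 ^ k)) n_o).filter (s.Sublist ·) with hT
  have hset : preimages k n_o s = ↑T := by
    ext f
    simp [preimages, hT, mem_allL]
  have hne : T.Nonempty := by
    refine ⟨s ++ List.replicate (n_o - n_b) ⟨0, by positivity⟩, ?_⟩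
    rw [hT, mem_filter, mem_allL]
    exact ⟨by simp [hs]; omega, List.sublist_append_left _ _⟩
  have hcnt : T.card = ∑ j ∈ Finset.range (n_o - n_b + 1),
      n_o.choose (j + n_b) * (2 ^ k - 1) ^ (n_o - n_b - j) := by
    have hlen : s.length ≤ n_o := by omega
    have := cnt_formula n_o s hlen
    rw [cnt] at this
    simpa [hT, hs, Fintype.card_fin] using this
  rw [hset, shannon_uniform_finset T hne, hcnt]
end
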